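/- For every real u with 0 < u < 1, one has √u ≥ u · ln((1+u)/(2u)) / ln(2/(1+u)). (Note that ln(2/(1+u)) > 0 for 0 < u < 1.) -/

import Mathlib

set_option maxHeartbeats 1000000

open Real

lemma hasDerivAt_g {x : ℝ} (h0 : -1 < x) (h1 : x < 1) :
    HasDerivAt (fun w : ℝ => Real.log (1 + w) - Real.log (1 - w) - 2 * w)
      (1 / (1 + x) + 1 / (1 - x) - 2) x := by
  have hx1 : (1:ℝ) + x ≠ 0 := by linarith
  have hx2 : (1:ℝ) - x ≠ 0 := by linarith
  have d1 : HasDerivAt (fun w : ℝ => 1 + w) 1 x := by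
    simpa using (hasDerivAt_id x).const_add 1
  have d2 : HasDerivAt (fun w : ℝ => 1 - w) (-1) x := by
    simpa using (hasDerivAt_id x).const_sub 1
  have d3 : HasDerivAt (fun w : ℝ => 2 * w) 2 x := by
    simpa using (hasDerivAt_id x).const_mul 2
  have l1 := d1.log hx1
  have l2 := d2.log hx2
  refine ((l1.sub l2).sub d3).congr_deriv ?_
  field_simp
  ring

lemma lem1 {w : ℝ} (hw0 : 0 ≤ w) (hw1 : w < 1) :
    2 * w ≤ Real.log (1 + w) - Real.log (1 - w) := by
  have hmono : MonotoneOn (fun w : ℝ => Real.log (1 + w) - Real.log (1 - w) - 2 * w)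
      (Set.Ico 0 1) := by
    apply monotoneOn_of_deriv_nonneg (convex_Ico 0 1)
    · intro x hx
      exact (hasDerivAt_g (by linarith [hx.1]) hx.2).continuousAt.continuousWithinAt
    · rw [interior_Ico]
      intro x hx
      exact (hasDerivAt_g (by linarith [hx.1.le]) hx.2).differentiableAt.differentiableWithinAt
    · rw [interior_Ico]
      intro x hx
      rw [(hasDerivAt_g (by linarith [hx.1.le]) hx.2).deriv]
      have h1 : (0:ℝ) < 1 + x := by linarith [hx.1]
      have h2 : (0:ℝ) < 1 - x := by linarith [hx.2]
      have a : 1 - x ≤ 1 / (1 + x) := by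
        rw [le_div_iff₀ h1]; nlinarith [sq_nonneg x]
      have b : 1 + x ≤ 1 / (1 - x) := by
        rw [le_div_iff₀ h2]; nlinarith [sq_nonneg x]
      linarith
  have h := hmono (Set.mem_Ico.mpr ⟨le_refl 0, one_pos⟩) (Set.mem_Ico.mpr ⟨hw0, hw1⟩) hw0
  simp only [add_zero, sub_zero, Real.log_one, mul_zero, sub_self] at h
  linarith

lemma hasDerivAt_F {x : ℝ} (h0 : -1 < x) (h1 : x < 1) :
    HasDerivAt (fun w : ℝ => w * (Real.log (1 + w) - Real.log (1 - w)) -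
        (Real.log (1 + w^2) - Real.log (1 - w^2)))
      ((Real.log (1 + x) - Real.log (1 - x)) - 2 * x / (1 + x^2)) x := by
  have hx1 : (1:ℝ) + x ≠ 0 := by linarith
  have hx2 : (1:ℝ) - x ≠ 0 := by linarith
  have hx3 : (1:ℝ) + x^2 ≠ 0 := by positivity
  have hx4 : (1:ℝ) - x^2 ≠ 0 := by nlinarith
  have d1 : HasDerivAt (fun w : ℝ => 1 + w) 1 x := by
    simpa using (hasDerivAt_id x).const_add 1
  have d2 : HasDerivAt (fun w : ℝ => 1 - w) (-1) x := by
    simpa using (hasDerivAt_id x).const_sub 1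
  have dsq : HasDerivAt (fun w : ℝ => w^2) (2*x) x := by
    simpa using (hasDerivAt_pow 2 x)
  have d5 : HasDerivAt (fun w : ℝ => 1 + w^2) (2*x) x := by
    simpa using dsq.const_add 1
  have d6 : HasDerivAt (fun w : ℝ => 1 - w^2) (-(2*x)) x := by
    simpa using dsq.const_sub 1
  have l1 := d1.log hx1
  have l2 := d2.log hx2
  have l5 := d5.log hx3
  have l6 := d6.log hx4
  refine (((hasDerivAt_id x).mul (l1.sub l2)).sub (l5.sub l6)).congr_deriv ?_
  simp only [Pi.sub_apply, id]
  field_simp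
  ring

lemma lem2 {w : ℝ} (hw0 : 0 ≤ w) (hw1 : w < 1) :
    Real.log (1 + w^2) - Real.log (1 - w^2) ≤
      w * (Real.log (1 + w) - Real.log (1 - w)) := by
  have hmono : MonotoneOn (fun w : ℝ => w * (Real.log (1 + w) - Real.log (1 - w)) -
      (Real.log (1 + w^2) - Real.log (1 - w^2))) (Set.Ico 0 1) := by
    apply monotoneOn_of_deriv_nonneg (convex_Ico 0 1)
    · intro x hx
      exact (hasDerivAt_F (by linarith [hx.1]) hx.2).continuousAt.continuousWithinAt
    · rw [interior_Ico]
      intro x hx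
      exact (hasDerivAt_F (by linarith [hx.1.le]) hx.2).differentiableAt.differentiableWithinAt
    · rw [interior_Ico]
      intro x hx
      rw [(hasDerivAt_F (by linarith [hx.1.le]) hx.2).deriv]
      have hL := lem1 hx.1.le hx.2
      have h3 : (0:ℝ) < 1 + x^2 := by positivity
      have : 2 * x / (1 + x^2) ≤ 2 * x := by
        rw [div_le_iff₀ h3]
        nlinarith [sq_nonneg x, hx.1.le]
      linarith
  have h := hmono (Set.mem_Ico.mpr ⟨le_refl 0, one_pos⟩) (Set.mem_Ico.mpr ⟨hw0, hw1⟩) hw0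
  norm_num at h
  linarith

theorem stmt_3 (u : ℝ) (hu₀ : 0 < u) (hu₁ : u < 1) :
    Real.sqrt u ≥ u * Real.log ((1 + u) / (2 * u)) / Real.log (2 / (1 + u)) := by
  have hs0 : 0 < Real.sqrt u := Real.sqrt_pos.mpr hu₀
  have hs1 : Real.sqrt u < 1 := by
    nlinarith [Real.sq_sqrt hu₀.le, Real.sqrt_nonneg u]
  set s := Real.sqrt u with hsdef
  have hsu : s ^ 2 = u := Real.sq_sqrt hu₀.le
  have h1s : (0:ℝ) < 1 + s := by linarith
  have hlogpos : 0 < Real.log (2 / (1 + u)) := by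
    apply Real.log_pos
    rw [lt_div_iff₀ (by linarith)]
    linarith
  rw [ge_iff_le, div_le_iff₀ hlogpos]
  -- atoms
  set P := Real.log s with hP
  set Q := Real.log (1 + s^2) - Real.log 2 with hQ
  -- rewrite goal logs
  have hu' : u = s^2 := hsu.symm
  have hlogu : Real.log u = 2 * P := by
    rw [hu', Real.log_pow]; push_cast; ring
  have hg1 : Real.log ((1 + u) / (2 * u)) = Q - 2 * P := by
    rw [Real.log_div (by linarith) (by positivity), Real.log_mul (by norm_num) (ne_of_gt hu₀),
      hlogu, hu', hQ]
    ring
  have hg2 : Real.log (2 / (1 + u)) = -Q := by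
    rw [Real.log_div (by norm_num) (by linarith), hu', hQ]
    ring
  rw [hg1, hg2]
  -- key inequality via w = (1-s)/(1+s)
  set w : ℝ := (1 - s) / (1 + s) with hw
  have hw0 : 0 ≤ w := by
    apply div_nonneg <;> linarith
  have hw1 : w < 1 := by
    rw [hw, div_lt_one h1s]; linarith
  have key := lem2 hw0 hw1
  have e1 : 1 + w = 2 / (1 + s) := by
    rw [hw]; field_simp; norm_num
  have e2 : 1 - w = 2 * s / (1 + s) := by
    rw [hw]; field_simp; ring
  have e3 : 1 + w^2 = 2 * (1 + s^2) / (1 + s)^2 := by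
    rw [hw]; field_simp; ring
  have e4 : 1 - w^2 = 4 * s / (1 + s)^2 := by
    rw [hw]; field_simp; ring
  have hs2 : (0:ℝ) < 1 + s^2 := by positivity
  have E1 : Real.log (1 + w) = Real.log 2 - Real.log (1 + s) := by
    rw [e1, Real.log_div (by norm_num) (ne_of_gt h1s)]
  have E2 : Real.log (1 - w) = Real.log 2 + P - Real.log (1 + s) := by
    rw [e2, Real.log_div (by positivity) (ne_of_gt h1s),
      Real.log_mul (by norm_num) (ne_of_gt hs0)]
  have E3 : Real.log (1 + w^2) = Real.log 2 + (Q + Real.log 2) - 2 * Real.log (1 + s) := by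
    rw [e3, Real.log_div (by positivity) (by positivity),
      Real.log_mul (by norm_num) (ne_of_gt hs2), Real.log_pow, hQ]
    push_cast; ring
  have E4 : Real.log (1 - w^2) = Real.log 4 + P - 2 * Real.log (1 + s) := by
    rw [e4, Real.log_div (by positivity) (by positivity),
      Real.log_mul (by norm_num) (ne_of_gt hs0), Real.log_pow]
    push_cast; ring
  have hlog4 : Real.log 4 = 2 * Real.log 2 := by
    rw [show (4:ℝ) = 2^2 by norm_num, Real.log_pow]; push_cast; ring
  rw [E1, E2, E3, E4, hlog4, hw] at key
  -- key : Q - P ≤ (1-s)/(1+s) * (-P)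
  have key2 : (1 + s) * (Q - P) ≤ (1 - s) * (-P) := by
    have h := key
    rw [div_mul_eq_mul_div, le_div_iff₀ h1s] at h
    nlinarith [h]
  nlinarith [key2, hs0, mul_le_mul_of_nonneg_left key2 hs0.le]
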